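/- arXiv:1812.03769 — 2 statements merged into one kernel-verified Lean document; each statement's English description precedes it below -/
import Mathlib

section
/- Suppose σ_1 > p − 1 and σ_2 > q − 1. Then there exists a constant ξ_1 > 0 (depending only on p, q, σ_1, σ_2 and β) such that the sequences {w^k} and {w̃^k} generated by GS-ADMM satisfy, for every k: ‖w^k − w̃^k‖_G² ≥ ξ_1(Σ_{i=1}^p‖A_i(x_i^k − x_i^{k+1})‖² + Σ_{j=1}^q‖B_j(y_j^k − y_j^{k+1})‖²) + (1−τ)β‖B(y^k − y^{k+1})‖² + (2−τ−s)β‖Ax^{k+1} + By^{k+1} − c‖² + 2(1−τ)β⟨Ax^{k+1} + By^{k+1} − c, B(y^k − y^{k+1})⟩, where B(y^k − y^{k+1}) = Σ_{j=1}^q B_j(y_j^k − y_j^{k+1}). -/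
open scoped RealInnerProductSpace
open Matrix Filter

/-- Multiplication of a matrix with a vector, viewed as a map between Euclidean spaces. -/
noncomputable def mv {n m : ℕ} (M : Matrix (Fin n) (Fin m) ℝ)
    (v : EuclideanSpace ℝ (Fin m)) : EuclideanSpace ℝ (Fin n) :=
  WithLp.toLp 2 (M.mulVec v)

/-- `sA A x = Σ_i A_i x_i`. -/
noncomputable def sA {p n : ℕ} {m : Fin p → ℕ}
    (A : ∀ i, Matrix (Fin n) (Fin (m i)) ℝ)
    (x : ∀ i, EuclideanSpace ℝ (Fin (m i))) : EuclideanSpace ℝ (Fin n) :=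
  ∑ i, mv (A i) (x i)

/-- The augmented Lagrangian
`L_β(x,y,λ) = Σ_i f_i(x_i) + Σ_j g_j(y_j) − ⟨λ, Ax + By − c⟩ + (β/2)‖Ax + By − c‖²`. -/
noncomputable def Lag {p q n : ℕ} {m : Fin p → ℕ} {d : Fin q → ℕ}
    (A : ∀ i, Matrix (Fin n) (Fin (m i)) ℝ)
    (B : ∀ j, Matrix (Fin n) (Fin (d j)) ℝ)
    (c : EuclideanSpace ℝ (Fin n))
    (f : ∀ i, EuclideanSpace ℝ (Fin (m i)) → ℝ)
    (g : ∀ j, EuclideanSpace ℝ (Fin (d j)) → ℝ)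
    (β : ℝ)
    (x : ∀ i, EuclideanSpace ℝ (Fin (m i)))
    (y : ∀ j, EuclideanSpace ℝ (Fin (d j)))
    (lam : EuclideanSpace ℝ (Fin n)) : ℝ :=
  (∑ i, f i (x i)) + (∑ j, g j (y j)) - ⟪lam, sA A x + sA B y - c⟫
    + β / 2 * ‖sA A x + sA B y - c‖ ^ 2

/-- The `H`-quadratic form `‖(x,y,λ)‖_H²`. -/
noncomputable def Hform {p q n : ℕ} {m : Fin p → ℕ} {d : Fin q → ℕ}
    (A : ∀ i, Matrix (Fin n) (Fin (m i)) ℝ)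
    (B : ∀ j, Matrix (Fin n) (Fin (d j)) ℝ)
    (β σ1 σ2 τ s : ℝ)
    (x : ∀ i, EuclideanSpace ℝ (Fin (m i)))
    (y : ∀ j, EuclideanSpace ℝ (Fin (d j)))
    (lam : EuclideanSpace ℝ (Fin n)) : ℝ :=
  β * ((σ1 + 1) * (∑ i, ‖mv (A i) (x i)‖ ^ 2) - ‖sA A x‖ ^ 2)
    + (σ2 + 1) * β * (∑ j, ‖mv (B j) (y j)‖ ^ 2)
    - τ * s / (τ + s) * β * ‖sA B y‖ ^ 2
    - 2 * τ / (τ + s) * ⟪sA B y, lam⟫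
    + 1 / (β * (τ + s)) * ‖lam‖ ^ 2

/-- The `G`-quadratic form `‖(x,y,λ)‖_G²`. -/
noncomputable def Gform {p q n : ℕ} {m : Fin p → ℕ} {d : Fin q → ℕ}
    (A : ∀ i, Matrix (Fin n) (Fin (m i)) ℝ)
    (B : ∀ j, Matrix (Fin n) (Fin (d j)) ℝ)
    (β σ1 σ2 τ s : ℝ)
    (x : ∀ i, EuclideanSpace ℝ (Fin (m i)))
    (y : ∀ j, EuclideanSpace ℝ (Fin (d j)))
    (lam : EuclideanSpace ℝ (Fin n)) : ℝ :=
  β * ((σ1 + 1) * (∑ i, ‖mv (A i) (x i)‖ ^ 2) - ‖sA A x‖ ^ 2)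
    + (σ2 + 1) * β * (∑ j, ‖mv (B j) (y j)‖ ^ 2)
    - s * β * ‖sA B y‖ ^ 2
    + 2 * (s - 1) * ⟪sA B y, lam⟫
    + (2 - τ - s) / β * ‖lam‖ ^ 2

/-- The `H_y`-quadratic form `‖y‖_{H_y}² = β[(σ₂+1)Σ_j‖B_j y_j‖² − ‖By‖²]`. -/
noncomputable def Hyform {q n : ℕ} {d : Fin q → ℕ}
    (B : ∀ j, Matrix (Fin n) (Fin (d j)) ℝ)
    (β σ2 : ℝ)
    (y : ∀ j, EuclideanSpace ℝ (Fin (d j))) : ℝ :=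
  β * ((σ2 + 1) * (∑ j, ‖mv (B j) (y j)‖ ^ 2) - ‖sA B y‖ ^ 2)

lemma sq_norm_sum_le' {n N : ℕ} (u : Fin N → EuclideanSpace ℝ (Fin n)) :
    ‖∑ i, u i‖ ^ 2 ≤ (N : ℝ) * ∑ i, ‖u i‖ ^ 2 := by
  calc ‖∑ i, u i‖ ^ 2 ≤ (∑ i, ‖u i‖) ^ 2 := by
        apply pow_le_pow_left₀ (norm_nonneg _) (norm_sum_le _ _)
      _ ≤ (N : ℝ) * ∑ i, ‖u i‖ ^ 2 := by
        simpa using sq_sum_le_card_mul_sum_sq (s := Finset.univ) (f := fun i => ‖u i‖)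

lemma sA_sub {p n : ℕ} {m : Fin p → ℕ}
    (A : ∀ i, Matrix (Fin n) (Fin (m i)) ℝ)
    (x x' : ∀ i, EuclideanSpace ℝ (Fin (m i))) :
    sA A (fun i => x i - x' i) = sA A x - sA A x' := by
  unfold sA mv
  rw [← Finset.sum_sub_distrib]
  exact Finset.sum_congr rfl fun i _ => by simp [Matrix.mulVec_sub]

/-- first lower bound for `‖w^k − w̃^k‖_G²`. -/
theorem stmt9
    {p q n : ℕ} (hp : 1 ≤ p) (hq : 1 ≤ q)
    {m : Fin p → ℕ} {d : Fin q → ℕ}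
    (A : ∀ i, Matrix (Fin n) (Fin (m i)) ℝ)
    (B : ∀ j, Matrix (Fin n) (Fin (d j)) ℝ)
    (hA : ∀ i, LinearIndependent ℝ (fun l => (A i)ᵀ l))
    (hB : ∀ j, LinearIndependent ℝ (fun l => (B j)ᵀ l))
    (c : EuclideanSpace ℝ (Fin n))
    (X : ∀ i, Set (EuclideanSpace ℝ (Fin (m i))))
    (Y : ∀ j, Set (EuclideanSpace ℝ (Fin (d j))))
    (hXne : ∀ i, (X i).Nonempty) (hXcl : ∀ i, IsClosed (X i)) (hXcv : ∀ i, Convex ℝ (X i))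
    (hYne : ∀ j, (Y j).Nonempty) (hYcl : ∀ j, IsClosed (Y j)) (hYcv : ∀ j, Convex ℝ (Y j))
    (f : ∀ i, EuclideanSpace ℝ (Fin (m i)) → ℝ)
    (g : ∀ j, EuclideanSpace ℝ (Fin (d j)) → ℝ)
    (hf : ∀ i, ConvexOn ℝ Set.univ (f i))
    (hg : ∀ j, ConvexOn ℝ Set.univ (g j))
    (β σ1 σ2 τ s : ℝ) (hβ : 0 < β)
    (x : ℕ → ∀ i, EuclideanSpace ℝ (Fin (m i)))
    (y : ℕ → ∀ j, EuclideanSpace ℝ (Fin (d j)))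
    (lam lamh : ℕ → EuclideanSpace ℝ (Fin n))
    (hxmin : ∀ k i, x (k+1) i ∈ X i ∧ ∀ z ∈ X i,
      Lag A B c f g β (Function.update (x k) i (x (k+1) i)) (y k) (lam k)
          + σ1 * β / 2 * ‖mv (A i) (x (k+1) i - x k i)‖ ^ 2
        ≤ Lag A B c f g β (Function.update (x k) i z) (y k) (lam k)
          + σ1 * β / 2 * ‖mv (A i) (z - x k i)‖ ^ 2)
    (hlamh : ∀ k, lamh k = lam k - (τ * β) • (sA A (x (k+1)) + sA B (y k) - c))
    (hymin : ∀ k j, y (k+1) j ∈ Y j ∧ ∀ z ∈ Y j,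
      Lag A B c f g β (x (k+1)) (Function.update (y k) j (y (k+1) j)) (lamh k)
          + σ2 * β / 2 * ‖mv (B j) (y (k+1) j - y k j)‖ ^ 2
        ≤ Lag A B c f g β (x (k+1)) (Function.update (y k) j z) (lamh k)
          + σ2 * β / 2 * ‖mv (B j) (z - y k j)‖ ^ 2)
    (hlam : ∀ k, lam (k+1) = lamh k - (s * β) • (sA A (x (k+1)) + sA B (y (k+1)) - c))
    (hσ1 : (p : ℝ) - 1 < σ1) (hσ2 : (q : ℝ) - 1 < σ2) :
    ∃ ξ1 : ℝ, 0 < ξ1 ∧ ∀ k : ℕ,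
      Gform A B β σ1 σ2 τ s (fun i => x k i - x (k+1) i)
          (fun j => y k j - y (k+1) j)
          (lam k - (lam k - β • (sA A (x (k+1)) + sA B (y k) - c)))
        ≥ ξ1 * ((∑ i, ‖mv (A i) (x k i - x (k+1) i)‖ ^ 2)
              + ∑ j, ‖mv (B j) (y k j - y (k+1) j)‖ ^ 2)
          + (1 - τ) * β * ‖sA B (fun j => y k j - y (k+1) j)‖ ^ 2
          + (2 - τ - s) * β * ‖sA A (x (k+1)) + sA B (y (k+1)) - c‖ ^ 2
          + 2 * (1 - τ) * β *
            ⟪sA A (x (k+1)) + sA B (y (k+1)) - c,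
              sA B (fun j => y k j - y (k+1) j)⟫ := by
  refine ⟨β * min (σ1 + 1 - (p : ℝ)) (σ2 + 1 - (q : ℝ)), ?_, ?_⟩
  · apply mul_pos hβ
    apply lt_min <;> linarith
  intro k
  set ξ1 : ℝ := β * min (σ1 + 1 - (p : ℝ)) (σ2 + 1 - (q : ℝ)) with hξ1def
  set Δx : ∀ i, EuclideanSpace ℝ (Fin (m i)) := fun i => x k i - x (k+1) i with hΔx
  set Δy : ∀ j, EuclideanSpace ℝ (Fin (d j)) := fun j => y k j - y (k+1) j with hΔy
  set e : EuclideanSpace ℝ (Fin n) := sA A (x (k+1)) + sA B (y (k+1)) - c with he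
  set v : EuclideanSpace ℝ (Fin n) := sA B Δy with hv
  have hr : sA A (x (k+1)) + sA B (y k) - c = e + v := by
    rw [he, hv, hΔy, sA_sub]
    abel
  have hl : lam k - (lam k - β • (sA A (x (k+1)) + sA B (y k) - c)) = β • (e + v) := by
    rw [sub_sub_cancel, hr]
  rw [hl]
  set SA : ℝ := ∑ i, ‖mv (A i) (Δx i)‖ ^ 2 with hSA
  set SB : ℝ := ∑ j, ‖mv (B j) (Δy j)‖ ^ 2 with hSB
  have hSAnn : 0 ≤ SA := Finset.sum_nonneg fun _ _ => by positivity
  have hSBnn : 0 ≤ SB := Finset.sum_nonneg fun _ _ => by positivity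
  have hCa : ‖sA A Δx‖ ^ 2 ≤ (p : ℝ) * SA := sq_norm_sum_le' _
  have hCb : ‖v‖ ^ 2 ≤ (q : ℝ) * SB := sq_norm_sum_le' _
  have hk1 : ξ1 ≤ β * (σ1 + 1 - (p : ℝ)) :=
    mul_le_mul_of_nonneg_left (min_le_left _ _) hβ.le
  have hk2 : ξ1 ≤ β * (σ2 + 1 - (q : ℝ)) :=
    mul_le_mul_of_nonneg_left (min_le_right _ _) hβ.le
  have key : β * ((σ1 + 1) * SA - ‖sA A Δx‖ ^ 2) + (σ2 + 1) * β * SB - β * ‖v‖ ^ 2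
      ≥ ξ1 * (SA + SB) := by
    have t1 : ξ1 * SA ≤ β * (σ1 + 1 - (p : ℝ)) * SA :=
      mul_le_mul_of_nonneg_right hk1 hSAnn
    have t2 : ξ1 * SB ≤ β * (σ2 + 1 - (q : ℝ)) * SB :=
      mul_le_mul_of_nonneg_right hk2 hSBnn
    have t3 : β * ‖sA A Δx‖ ^ 2 ≤ β * ((p : ℝ) * SA) :=
      mul_le_mul_of_nonneg_left hCa hβ.le
    have t4 : β * ‖v‖ ^ 2 ≤ β * ((q : ℝ) * SB) :=
      mul_le_mul_of_nonneg_left hCb hβ.le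
    nlinarith [t1, t2, t3, t4]
  have h1 : ⟪v, β • (e + v)⟫ = β * (⟪e, v⟫ + ‖v‖ ^ 2) := by
    rw [real_inner_smul_right, inner_add_right, real_inner_comm v e,
      real_inner_self_eq_norm_sq]
  have h2 : ‖β • (e + v)‖ ^ 2 = β ^ 2 * (‖e‖ ^ 2 + 2 * ⟪e, v⟫ + ‖v‖ ^ 2) := by
    rw [norm_smul, Real.norm_eq_abs, abs_of_pos hβ, mul_pow, norm_add_sq_real]
  have h3 : (2 - τ - s) / β * ‖β • (e + v)‖ ^ 2
      = (2 - τ - s) * β * (‖e‖ ^ 2 + 2 * ⟪e, v⟫ + ‖v‖ ^ 2) := by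
    rw [h2]; field_simp
  unfold Gform
  rw [← hv, ← hSA, ← hSB, h1, h3]
  linarith [key]
end

section
/- Suppose σ_1 > p − 1, σ_2 > q − 1 and (τ, s) ∈ K. Then there exist constants ξ_1, ξ_2 > 0 and ξ_3, ξ_4 ≥ 0 — one may take ξ_2 = (2 − τ − s − (1−s)²/(1+τ))β, ξ_3 = ((1−s)²/(1+τ))β and ξ_4 = (1−τ)/(1+τ) — such that the sequences {w^k} and {w̃^k} generated by GS-ADMM satisfy, for every k ≥ 1: ‖w^k − w̃^k‖_G² ≥ ξ_1(Σ_{i=1}^p‖A_i(x_i^k − x_i^{k+1})‖² + Σ_{j=1}^q‖B_j(y_j^k − y_j^{k+1})‖²) + ξ_2‖Ax^{k+1} + By^{k+1} − c‖² + ξ_3(‖Ax^{k+1} + By^{k+1} − c‖² − ‖Ax^k + By^k − c‖²) + ξ_4(‖y^{k+1} − y^k‖_{H_y}² − ‖y^k − y^{k−1}‖_{H_y}²). -/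
set_option maxHeartbeats 1000000


open scoped RealInnerProductSpace
open Matrix Filter

lemma mv_sub {n m : ℕ} (M : Matrix (Fin n) (Fin m) ℝ) (u v : EuclideanSpace ℝ (Fin m)) :
    mv M (u - v) = mv M u - mv M v := by
  simp only [mv]
  rw [WithLp.ofLp_sub, Matrix.mulVec_sub, WithLp.toLp_sub]

lemma mv_addsmul {n m : ℕ} (M : Matrix (Fin n) (Fin m) ℝ) (θ : ℝ) (u v : EuclideanSpace ℝ (Fin m)) :
    mv M ((1-θ) • u + θ • v) = mv M u + θ • (mv M v - mv M u) := by
  simp only [mv]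
  rw [WithLp.ofLp_add, WithLp.ofLp_smul, WithLp.ofLp_smul, Matrix.mulVec_add, Matrix.mulVec_smul, Matrix.mulVec_smul,
    ← WithLp.toLp_sub, ← WithLp.toLp_smul, ← WithLp.toLp_add]
  congr 1
  module

lemma csum {ι : Type*} [Fintype ι] {n : ℕ} (f : ι → EuclideanSpace ℝ (Fin n)) :
    ‖∑ i, f i‖^2 ≤ (Fintype.card ι : ℝ) * ∑ i, ‖f i‖^2 := by
  have h1 : ‖∑ i, f i‖ ≤ ∑ i, ‖f i‖ := norm_sum_le _ _
  have h2 : (∑ i, ‖f i‖)^2 ≤ (Fintype.card ι : ℝ) * ∑ i, ‖f i‖^2 := by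
    have := sq_sum_le_card_mul_sum_sq (s := (Finset.univ : Finset ι)) (f := fun i => ‖f i‖)
    simpa using this
  calc ‖∑ i, f i‖^2 ≤ (∑ i, ‖f i‖)^2 := by
        apply pow_le_pow_left₀ (norm_nonneg _) h1
    _ ≤ _ := h2

lemma vi_lemma {N D : ℕ} (B : Matrix (Fin N) (Fin D) ℝ)
    (g : EuclideanSpace ℝ (Fin D) → ℝ) (hg : ConvexOn ℝ Set.univ g)
    (Y : Set (EuclideanSpace ℝ (Fin D))) (hY : Convex ℝ Y)
    (μ u0 w0 : EuclideanSpace ℝ (Fin N)) (c1 c2 : ℝ) (hc1 : 0 ≤ c1) (hc2 : 0 ≤ c2)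
    (yh : EuclideanSpace ℝ (Fin D)) (hyh : yh ∈ Y)
    (hmin : ∀ z ∈ Y,
      g yh - ⟪μ, mv B yh⟫ + c1/2 * ‖mv B yh + u0‖^2 + c2/2 * ‖mv B yh - w0‖^2
      ≤ g z - ⟪μ, mv B z⟫ + c1/2 * ‖mv B z + u0‖^2 + c2/2 * ‖mv B z - w0‖^2)
    (z : EuclideanSpace ℝ (Fin D)) (hz : z ∈ Y) :
    0 ≤ g z - g yh + ⟪mv B z - mv B yh, -μ + c1 • (mv B yh + u0) + c2 • (mv B yh - w0)⟫ := by
  set b := mv B z - mv B yh with hb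
  have hXexp : ⟪b, -μ + c1 • (mv B yh + u0) + c2 • (mv B yh - w0)⟫
      = -⟪b, μ⟫ + c1 * ⟪b, mv B yh + u0⟫ + c2 * ⟪b, mv B yh - w0⟫ := by
    rw [inner_add_right, inner_add_right, inner_neg_right, real_inner_smul_right,
      real_inner_smul_right]
  rw [hXexp]
  set X := g z - g yh + (-⟪b, μ⟫ + c1 * ⟪b, mv B yh + u0⟫ + c2 * ⟪b, mv B yh - w0⟫) with hX
  set K := (c1 + c2)/2 * ‖b‖^2 with hK
  have hKnn : 0 ≤ K := by positivity
  have hstep : ∀ θ : ℝ, 0 < θ → θ ≤ 1 → 0 ≤ X + θ * K := by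
    intro θ h0 h1
    have hzθ : (1-θ) • yh + θ • z ∈ Y := hY hyh hz (by linarith) h0.le (by ring)
    have hgθ : g ((1-θ) • yh + θ • z) ≤ (1-θ) * g yh + θ * g z :=
      hg.2 (Set.mem_univ yh) (Set.mem_univ z) (by linarith) h0.le (by ring)
    have h2 := hmin _ hzθ
    rw [mv_addsmul, ← hb] at h2
    have habs : |θ| = θ := abs_of_pos h0
    have e1 : c1/2 * ‖mv B yh + θ • b + u0‖^2
        = c1/2 * ‖mv B yh + u0‖^2 + c1 * (θ * ⟪b, mv B yh + u0⟫)
          + c1/2 * (θ^2 * ‖b‖^2) := by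
      have hv : mv B yh + θ • b + u0 = (mv B yh + u0) + θ • b := by abel
      rw [hv, norm_add_sq_real, real_inner_smul_right, real_inner_comm, norm_smul,
        Real.norm_eq_abs, habs, mul_pow]
      ring
    have e2 : c2/2 * ‖mv B yh + θ • b - w0‖^2
        = c2/2 * ‖mv B yh - w0‖^2 + c2 * (θ * ⟪b, mv B yh - w0⟫)
          + c2/2 * (θ^2 * ‖b‖^2) := by
      have hv : mv B yh + θ • b - w0 = (mv B yh - w0) + θ • b := by abel
      rw [hv, norm_add_sq_real, real_inner_smul_right, real_inner_comm, norm_smul,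
        Real.norm_eq_abs, habs, mul_pow]
      ring
    have e3 : ⟪μ, mv B yh + θ • b⟫ = ⟪μ, mv B yh⟫ + θ * ⟪b, μ⟫ := by
      rw [inner_add_right, real_inner_smul_right, real_inner_comm μ b]
    rw [e1, e2, e3] at h2
    have hlin : 0 ≤ θ * X + θ^2 * K := by
      rw [hX, hK]
      nlinarith [h2, hgθ]
    have hmul : θ * (X + θ * K) = θ * X + θ^2 * K := by ring
    refine le_of_mul_le_mul_left ?_ h0
    rw [hmul, mul_zero]
    exact hlin
  by_contra hXneg
  push_neg at hXneg
  have h2K : (0:ℝ) < 2*K + 1 := by linarith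
  set θ := min 1 (-X / (2*K+1)) with hθ
  have hθpos : 0 < θ := lt_min one_pos (div_pos (by linarith) h2K)
  have hθ1 : θ ≤ 1 := min_le_left _ _
  have h3 : θ * (2*K+1) ≤ -X := by
    rw [← le_div_iff₀ h2K]; exact min_le_right _ _
  have h4 := hstep θ hθpos hθ1
  have h5 : 0 ≤ θ * K := mul_nonneg hθpos.le hKnn
  linarith [h3, h4, h5, hθpos]

lemma y_vi {p q n : ℕ} {m : Fin p → ℕ} {d : Fin q → ℕ}
    (A : ∀ i, Matrix (Fin n) (Fin (m i)) ℝ)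
    (B : ∀ j, Matrix (Fin n) (Fin (d j)) ℝ)
    (c : EuclideanSpace ℝ (Fin n))
    (f : ∀ i, EuclideanSpace ℝ (Fin (m i)) → ℝ)
    (g : ∀ j, EuclideanSpace ℝ (Fin (d j)) → ℝ)
    {Y : ∀ j, Set (EuclideanSpace ℝ (Fin (d j)))}
    (β σ2 : ℝ) (hβ : 0 < β) (hσ2 : 0 ≤ σ2)
    (xx : ∀ i, EuclideanSpace ℝ (Fin (m i)))
    (yy : ∀ j, EuclideanSpace ℝ (Fin (d j)))
    (μ : EuclideanSpace ℝ (Fin n))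
    (j : Fin q)
    (hgj : ConvexOn ℝ Set.univ (g j)) (hYj : Convex ℝ (Y j))
    (ynew : EuclideanSpace ℝ (Fin (d j)))
    (hmem : ynew ∈ Y j)
    (hmin : ∀ z ∈ Y j,
      Lag A B c f g β xx (Function.update yy j ynew) μ
          + σ2 * β / 2 * ‖mv (B j) (ynew - yy j)‖ ^ 2
      ≤ Lag A B c f g β xx (Function.update yy j z) μ
          + σ2 * β / 2 * ‖mv (B j) (z - yy j)‖ ^ 2)
    (z : EuclideanSpace ℝ (Fin (d j))) (hz : z ∈ Y j) :
    0 ≤ g j z - g j ynew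
      + ⟪mv (B j) z - mv (B j) ynew,
          -μ + β • (sA A xx + sA B yy - c)
            - ((σ2+1)*β) • (mv (B j) (yy j) - mv (B j) ynew)⟫ := by
  classical
  have hupdB : ∀ w : EuclideanSpace ℝ (Fin (d j)),
      sA B (Function.update yy j w) = mv (B j) w + (sA B yy - mv (B j) (yy j)) := by
    intro w
    have h2 : sA B (Function.update yy j w)
        = ∑ l, Function.update (fun l => mv (B l) (yy l)) j (mv (B j) w) l := by
      refine Finset.sum_congr rfl fun l _ => ?_
      rcases eq_or_ne l j with rfl | h
      · simp
      · simp [Function.update_of_ne h]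
    rw [h2, Finset.sum_update_of_mem (Finset.mem_univ j)]
    have h4 := Finset.sum_eq_sum_sdiff_singleton_add (Finset.mem_univ j) (fun l => mv (B l) (yy l))
    have h3 : ∑ l ∈ Finset.univ \ {j}, mv (B l) (yy l) = sA B yy - mv (B j) (yy j) :=
      eq_sub_of_add_eq h4.symm
    rw [h3]
  have hupdg : ∀ w : EuclideanSpace ℝ (Fin (d j)),
      (∑ l, g l (Function.update yy j w l)) = g j w + ((∑ l, g l (yy l)) - g j (yy j)) := by
    intro w
    have h2 : (∑ l, g l (Function.update yy j w l))
        = ∑ l, Function.update (fun l => g l (yy l)) j (g j w) l := by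
      refine Finset.sum_congr rfl fun l _ => ?_
      rcases eq_or_ne l j with rfl | h
      · simp
      · simp [Function.update_of_ne h]
    rw [h2, Finset.sum_update_of_mem (Finset.mem_univ j)]
    have h4 := Finset.sum_eq_sum_sdiff_singleton_add (Finset.mem_univ j) (fun l => g l (yy l))
    have h3 : ∑ l ∈ Finset.univ \ {j}, g l (yy l) = (∑ l, g l (yy l)) - g j (yy j) :=
      eq_sub_of_add_eq h4.symm
    rw [h3]
  have hLag : ∀ w : EuclideanSpace ℝ (Fin (d j)),
      Lag A B c f g β xx (Function.update yy j w) μ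
          + σ2 * β / 2 * ‖mv (B j) (w - yy j)‖ ^ 2
      = (g j w - ⟪μ, mv (B j) w⟫
          + β/2 * ‖mv (B j) w + (sA A xx + sA B yy - mv (B j) (yy j) - c)‖^2
          + (σ2*β)/2 * ‖mv (B j) w - mv (B j) (yy j)‖^2)
        + ((∑ i, f i (xx i)) + ((∑ l, g l (yy l)) - g j (yy j))
            - ⟪μ, sA A xx + sA B yy - mv (B j) (yy j) - c⟫) := by
    intro w
    simp only [Lag]
    rw [hupdB w, hupdg w, mv_sub]
    have harg : sA A xx + (mv (B j) w + (sA B yy - mv (B j) (yy j))) - c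
        = mv (B j) w + (sA A xx + sA B yy - mv (B j) (yy j) - c) := by abel
    rw [harg, inner_add_right]
    ring
  have hmin' : ∀ w ∈ Y j,
      g j ynew - ⟪μ, mv (B j) ynew⟫
          + β/2 * ‖mv (B j) ynew + (sA A xx + sA B yy - mv (B j) (yy j) - c)‖^2
          + (σ2*β)/2 * ‖mv (B j) ynew - mv (B j) (yy j)‖^2
      ≤ g j w - ⟪μ, mv (B j) w⟫
          + β/2 * ‖mv (B j) w + (sA A xx + sA B yy - mv (B j) (yy j) - c)‖^2
          + (σ2*β)/2 * ‖mv (B j) w - mv (B j) (yy j)‖^2 := by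
    intro w hw
    have h := hmin w hw
    rw [hLag ynew, hLag w] at h
    linarith
  have h := vi_lemma (B j) (g j) hgj (Y j) hYj μ
    (sA A xx + sA B yy - mv (B j) (yy j) - c) (mv (B j) (yy j)) β (σ2*β)
    hβ.le (mul_nonneg hσ2 hβ.le) ynew hmem hmin' z hz
  have hvec : -μ + β • (mv (B j) ynew + (sA A xx + sA B yy - mv (B j) (yy j) - c))
        + (σ2*β) • (mv (B j) ynew - mv (B j) (yy j))
      = -μ + β • (sA A xx + sA B yy - c)
          - ((σ2+1)*β) • (mv (B j) (yy j) - mv (B j) ynew) := by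
    module
  rw [hvec] at h
  exact h
/-- lower bound for `‖w^k − w̃^k‖_G²` with explicit constants
`ξ2 = (2 − τ − s − (1−s)²/(1+τ))β > 0`, `ξ3 = ((1−s)²/(1+τ))β ≥ 0`,
`ξ4 = (1−τ)/(1+τ) ≥ 0` (Theorem 3.8 of the paper). -/
theorem stmt12
    {p q n : ℕ} (hp : 1 ≤ p) (hq : 1 ≤ q)
    {m : Fin p → ℕ} {d : Fin q → ℕ}
    (A : ∀ i, Matrix (Fin n) (Fin (m i)) ℝ)
    (B : ∀ j, Matrix (Fin n) (Fin (d j)) ℝ)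
    (hA : ∀ i, LinearIndependent ℝ (fun l => (A i)ᵀ l))
    (hB : ∀ j, LinearIndependent ℝ (fun l => (B j)ᵀ l))
    (c : EuclideanSpace ℝ (Fin n))
    (X : ∀ i, Set (EuclideanSpace ℝ (Fin (m i))))
    (Y : ∀ j, Set (EuclideanSpace ℝ (Fin (d j))))
    (hXne : ∀ i, (X i).Nonempty) (hXcl : ∀ i, IsClosed (X i)) (hXcv : ∀ i, Convex ℝ (X i))
    (hYne : ∀ j, (Y j).Nonempty) (hYcl : ∀ j, IsClosed (Y j)) (hYcv : ∀ j, Convex ℝ (Y j))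
    (f : ∀ i, EuclideanSpace ℝ (Fin (m i)) → ℝ)
    (g : ∀ j, EuclideanSpace ℝ (Fin (d j)) → ℝ)
    (hf : ∀ i, ConvexOn ℝ Set.univ (f i))
    (hg : ∀ j, ConvexOn ℝ Set.univ (g j))
    (β σ1 σ2 τ s : ℝ) (hβ : 0 < β)
    (x : ℕ → ∀ i, EuclideanSpace ℝ (Fin (m i)))
    (y : ℕ → ∀ j, EuclideanSpace ℝ (Fin (d j)))
    (lam lamh : ℕ → EuclideanSpace ℝ (Fin n))
    (hxmin : ∀ k i, x (k+1) i ∈ X i ∧ ∀ z ∈ X i,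
      Lag A B c f g β (Function.update (x k) i (x (k+1) i)) (y k) (lam k)
          + σ1 * β / 2 * ‖mv (A i) (x (k+1) i - x k i)‖ ^ 2
        ≤ Lag A B c f g β (Function.update (x k) i z) (y k) (lam k)
          + σ1 * β / 2 * ‖mv (A i) (z - x k i)‖ ^ 2)
    (hlamh : ∀ k, lamh k = lam k - (τ * β) • (sA A (x (k+1)) + sA B (y k) - c))
    (hymin : ∀ k j, y (k+1) j ∈ Y j ∧ ∀ z ∈ Y j,
      Lag A B c f g β (x (k+1)) (Function.update (y k) j (y (k+1) j)) (lamh k)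
          + σ2 * β / 2 * ‖mv (B j) (y (k+1) j - y k j)‖ ^ 2
        ≤ Lag A B c f g β (x (k+1)) (Function.update (y k) j z) (lamh k)
          + σ2 * β / 2 * ‖mv (B j) (z - y k j)‖ ^ 2)
    (hlam : ∀ k, lam (k+1) = lamh k - (s * β) • (sA A (x (k+1)) + sA B (y (k+1)) - c))
    (hσ1 : (p : ℝ) - 1 < σ1) (hσ2 : (q : ℝ) - 1 < σ2)
    (hK : τ + s > 0 ∧ τ ≤ 1 ∧ -τ ^ 2 - s ^ 2 - τ * s + τ + s + 1 > 0) :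
    ∃ ξ1 : ℝ, 0 < ξ1 ∧
      (let ξ2 : ℝ := (2 - τ - s - (1 - s) ^ 2 / (1 + τ)) * β
       let ξ3 : ℝ := (1 - s) ^ 2 / (1 + τ) * β
       let ξ4 : ℝ := (1 - τ) / (1 + τ)
       0 < ξ2 ∧ 0 ≤ ξ3 ∧ 0 ≤ ξ4 ∧
       ∀ k : ℕ, 1 ≤ k →
        Gform A B β σ1 σ2 τ s (fun i => x k i - x (k+1) i)
            (fun j => y k j - y (k+1) j)
            (lam k - (lam k - β • (sA A (x (k+1)) + sA B (y k) - c)))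
          ≥ ξ1 * ((∑ i, ‖mv (A i) (x k i - x (k+1) i)‖ ^ 2)
                + ∑ j, ‖mv (B j) (y k j - y (k+1) j)‖ ^ 2)
            + ξ2 * ‖sA A (x (k+1)) + sA B (y (k+1)) - c‖ ^ 2
            + ξ3 * (‖sA A (x (k+1)) + sA B (y (k+1)) - c‖ ^ 2
                - ‖sA A (x k) + sA B (y k) - c‖ ^ 2)
            + ξ4 * (Hyform B β σ2 (fun j => y (k+1) j - y k j)
                - Hyform B β σ2 (fun j => y k j - y (k-1) j))) := by
  classical
  obtain ⟨hK1, hK2, hK3⟩ := hK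
  have hp1 : (1:ℝ) ≤ (p:ℝ) := by exact_mod_cast hp
  have hq1 : (1:ℝ) ≤ (q:ℝ) := by exact_mod_cast hq
  have hσ2nn : (0:ℝ) ≤ σ2 := by linarith
  have hτ1 : 0 < 1 + τ := by
    by_contra h
    push_neg at h
    nlinarith [sq_nonneg (2*s + τ - 1),
      mul_nonneg (show (0:ℝ) ≤ 5 - 3*τ by linarith) (show (0:ℝ) ≤ -(1+τ) by linarith)]
  have hnum : 0 < (2 - τ - s) * (1 + τ) - (1 - s)^2 := by nlinarith [hK3]
  refine ⟨β * min (σ1 + 1 - (p:ℝ)) (σ2 + 1 - (q:ℝ)),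
    mul_pos hβ (lt_min (by linarith) (by linarith)), ?_, ?_, ?_, ?_⟩
  · have h2 : 2 - τ - s - (1 - s)^2/(1+τ) = ((2 - τ - s) * (1 + τ) - (1 - s)^2)/(1+τ) := by
      field_simp
    rw [h2]
    exact mul_pos (div_pos hnum hτ1) hβ
  · exact mul_nonneg (div_nonneg (sq_nonneg _) hτ1.le) hβ.le
  · exact div_nonneg (by linarith) hτ1.le
  · intro k hk
    obtain ⟨k₀, rfl⟩ : ∃ k₀, k = k₀ + 1 := ⟨k - 1, (Nat.succ_pred_eq_of_pos hk).symm⟩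
    simp only [Nat.add_sub_cancel]
    have VI : ∀ (κ : ℕ) (j : Fin q) (z : EuclideanSpace ℝ (Fin (d j))), z ∈ Y j →
        0 ≤ g j z - g j (y (κ+1) j)
          + ⟪mv (B j) z - mv (B j) (y (κ+1) j),
              -(lamh κ) + β • (sA A (x (κ+1)) + sA B (y κ) - c)
                - ((σ2+1)*β) • (mv (B j) (y κ j) - mv (B j) (y (κ+1) j))⟫ :=
      fun κ j z hz => y_vi A B c f g β σ2 hβ hσ2nn (x (κ+1)) (y κ) (lamh κ) j
        (hg j) (hYcv j) (y (κ+1) j) ((hymin κ j).1) ((hymin κ j).2) z hz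
    have hv : ∀ j : Fin q,
        (-(lamh (k₀+1)) + β • (sA A (x (k₀ + 1 + 1)) + sA B (y (k₀ + 1)) - c) - ((σ2+1)*β) • (mv (B j) (y (k₀ + 1) j) - mv (B j) (y (k₀ + 1 + 1) j)))
          - (-(lamh k₀) + β • (sA A (x (k₀ + 1)) + sA B (y k₀) - c) - ((σ2+1)*β) • (mv (B j) (y k₀ j) - mv (B j) (y (k₀ + 1) j)))
        = ((s-1)*β) • (sA A (x (k₀ + 1)) + sA B (y (k₀ + 1)) - c) + ((1+τ)*β) • (sA A (x (k₀ + 1 + 1)) + sA B (y (k₀ + 1)) - c) + β • (sA B (y (k₀ + 1)) - sA B (y k₀))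
          - ((σ2+1)*β) • ((mv (B j) (y (k₀ + 1) j) - mv (B j) (y (k₀ + 1 + 1) j)) + (mv (B j) (y (k₀ + 1) j) - mv (B j) (y k₀ j))) := by
      intro j
      rw [hlamh (k₀+1), hlam k₀, hlamh k₀]
      module
    have keyj : ∀ j : Fin q,
        0 ≤ ⟪(mv (B j) (y (k₀ + 1) j) - mv (B j) (y (k₀ + 1 + 1) j)),
              ((s-1)*β) • (sA A (x (k₀ + 1)) + sA B (y (k₀ + 1)) - c) + ((1+τ)*β) • (sA A (x (k₀ + 1 + 1)) + sA B (y (k₀ + 1)) - c) + β • (sA B (y (k₀ + 1)) - sA B (y k₀))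
                - ((σ2+1)*β) • ((mv (B j) (y (k₀ + 1) j) - mv (B j) (y (k₀ + 1 + 1) j)) + (mv (B j) (y (k₀ + 1) j) - mv (B j) (y k₀ j)))⟫ := by
      intro j
      rw [← hv j, inner_sub_right]
      have h1 := VI (k₀+1) j (y (k₀ + 1) j) ((hymin k₀ j).1)
      have h2 := VI k₀ j (y (k₀ + 1 + 1) j) ((hymin (k₀+1) j).1)
      have hneg : mv (B j) (y (k₀ + 1 + 1) j) - mv (B j) (y (k₀ + 1) j)
          = -(mv (B j) (y (k₀ + 1) j) - mv (B j) (y (k₀ + 1 + 1) j)) := by abel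
      rw [hneg, inner_neg_left] at h2
      linarith [h1, h2]
    have hscal : ∀ j : Fin q,
        ⟪(mv (B j) (y (k₀ + 1) j) - mv (B j) (y (k₀ + 1 + 1) j)),
            ((s-1)*β) • (sA A (x (k₀ + 1)) + sA B (y (k₀ + 1)) - c) + ((1+τ)*β) • (sA A (x (k₀ + 1 + 1)) + sA B (y (k₀ + 1)) - c) + β • (sA B (y (k₀ + 1)) - sA B (y k₀))
              - ((σ2+1)*β) • ((mv (B j) (y (k₀ + 1) j) - mv (B j) (y (k₀ + 1 + 1) j)) + (mv (B j) (y (k₀ + 1) j) - mv (B j) (y k₀ j)))⟫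
        = (s-1)*β*⟪(mv (B j) (y (k₀ + 1) j) - mv (B j) (y (k₀ + 1 + 1) j)), sA A (x (k₀ + 1)) + sA B (y (k₀ + 1)) - c⟫ + (1+τ)*β*⟪(mv (B j) (y (k₀ + 1) j) - mv (B j) (y (k₀ + 1 + 1) j)), sA A (x (k₀ + 1 + 1)) + sA B (y (k₀ + 1)) - c⟫ + β*⟪(mv (B j) (y (k₀ + 1) j) - mv (B j) (y (k₀ + 1 + 1) j)), sA B (y (k₀ + 1)) - sA B (y k₀)⟫
          - (σ2+1)*β*⟪(mv (B j) (y (k₀ + 1) j) - mv (B j) (y (k₀ + 1 + 1) j)), (mv (B j) (y (k₀ + 1) j) - mv (B j) (y (k₀ + 1 + 1) j)) + (mv (B j) (y (k₀ + 1) j) - mv (B j) (y k₀ j))⟫ := by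
      intro j
      rw [inner_sub_right, inner_add_right, inner_add_right, real_inner_smul_right,
        real_inner_smul_right, real_inner_smul_right, real_inner_smul_right]
    have hTsum : (∑ j, (mv (B j) (y (k₀ + 1) j) - mv (B j) (y (k₀ + 1 + 1) j))) = sA B (y (k₀ + 1)) - sA B (y (k₀ + 1 + 1)) := by
      simp only [Finset.sum_sub_distrib, sA]
    have hTPsum : (∑ j, (mv (B j) (y (k₀ + 1) j) - mv (B j) (y k₀ j))) = sA B (y (k₀ + 1)) - sA B (y k₀) := by
      simp only [Finset.sum_sub_distrib, sA]
    have hMDsum : (∑ j, mv (B j) (y (k₀ + 1) j - y (k₀ + 1 + 1) j)) = sA B (y (k₀ + 1)) - sA B (y (k₀ + 1 + 1)) := by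
      simp only [mv_sub, Finset.sum_sub_distrib, sA]
    have keyscal : 0 ≤ (s-1)*β*(⟪sA B (y (k₀ + 1)) - sA B (y (k₀ + 1 + 1)), sA A (x (k₀ + 1)) + sA B (y (k₀ + 1)) - c⟫) + (1+τ)*β*(⟪sA B (y (k₀ + 1)) - sA B (y (k₀ + 1 + 1)), sA A (x (k₀ + 1 + 1)) + sA B (y (k₀ + 1)) - c⟫) + β*(⟪sA B (y (k₀ + 1)) - sA B (y (k₀ + 1 + 1)), sA B (y (k₀ + 1)) - sA B (y k₀)⟫)
        - (σ2+1)*β*(∑ j, ⟪(mv (B j) (y (k₀ + 1) j) - mv (B j) (y (k₀ + 1 + 1) j)), (mv (B j) (y (k₀ + 1) j) - mv (B j) (y (k₀ + 1 + 1) j)) + (mv (B j) (y (k₀ + 1) j) - mv (B j) (y k₀ j))⟫) := by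
      have h0 : 0 ≤ ∑ j, ((s-1)*β*⟪(mv (B j) (y (k₀ + 1) j) - mv (B j) (y (k₀ + 1 + 1) j)), sA A (x (k₀ + 1)) + sA B (y (k₀ + 1)) - c⟫ + (1+τ)*β*⟪(mv (B j) (y (k₀ + 1) j) - mv (B j) (y (k₀ + 1 + 1) j)), sA A (x (k₀ + 1 + 1)) + sA B (y (k₀ + 1)) - c⟫
          + β*⟪(mv (B j) (y (k₀ + 1) j) - mv (B j) (y (k₀ + 1 + 1) j)), sA B (y (k₀ + 1)) - sA B (y k₀)⟫ - (σ2+1)*β*⟪(mv (B j) (y (k₀ + 1) j) - mv (B j) (y (k₀ + 1 + 1) j)), (mv (B j) (y (k₀ + 1) j) - mv (B j) (y (k₀ + 1 + 1) j)) + (mv (B j) (y (k₀ + 1) j) - mv (B j) (y k₀ j))⟫) :=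
        Finset.sum_nonneg fun j _ => by rw [← hscal j]; exact keyj j
      rw [Finset.sum_sub_distrib, Finset.sum_add_distrib, Finset.sum_add_distrib,
        ← Finset.mul_sum, ← Finset.mul_sum, ← Finset.mul_sum, ← Finset.mul_sum,
        ← sum_inner, ← sum_inner, ← sum_inner, hTsum] at h0
      exact h0
    have hD : 2*(∑ j, ⟪(mv (B j) (y (k₀ + 1) j) - mv (B j) (y (k₀ + 1 + 1) j)), (mv (B j) (y (k₀ + 1) j) - mv (B j) (y (k₀ + 1 + 1) j)) + (mv (B j) (y (k₀ + 1) j) - mv (B j) (y k₀ j))⟫) = (∑ j, ‖mv (B j) (y (k₀ + 1) j - y (k₀ + 1 + 1) j)‖ ^ 2) - (∑ j, ‖mv (B j) (y (k₀ + 1) j - y k₀ j)‖ ^ 2) + (∑ j, ‖(mv (B j) (y (k₀ + 1) j) - mv (B j) (y (k₀ + 1 + 1) j)) + (mv (B j) (y (k₀ + 1) j) - mv (B j) (y k₀ j))‖ ^ 2) := by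
      have perj : ∀ j : Fin q, 2*⟪(mv (B j) (y (k₀ + 1) j) - mv (B j) (y (k₀ + 1 + 1) j)), (mv (B j) (y (k₀ + 1) j) - mv (B j) (y (k₀ + 1 + 1) j)) + (mv (B j) (y (k₀ + 1) j) - mv (B j) (y k₀ j))⟫
          = ‖mv (B j) (y (k₀ + 1) j - y (k₀ + 1 + 1) j)‖ ^ 2 - ‖mv (B j) (y (k₀ + 1) j - y k₀ j)‖ ^ 2 + ‖(mv (B j) (y (k₀ + 1) j) - mv (B j) (y (k₀ + 1 + 1) j)) + (mv (B j) (y (k₀ + 1) j) - mv (B j) (y k₀ j))‖ ^ 2 := by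
        intro j
        rw [mv_sub, mv_sub, inner_add_right, real_inner_self_eq_norm_sq, norm_add_sq_real]
        ring
      rw [Finset.mul_sum]
      rw [Finset.sum_congr rfl fun j _ => perj j, Finset.sum_add_distrib,
        Finset.sum_sub_distrib]
    have htt : 2*(⟪sA B (y (k₀ + 1)) - sA B (y (k₀ + 1 + 1)), sA B (y (k₀ + 1)) - sA B (y k₀)⟫) = ‖(sA B (y (k₀ + 1)) - sA B (y (k₀ + 1 + 1))) + (sA B (y (k₀ + 1)) - sA B (y k₀))‖ ^ 2 - ‖sA B (y (k₀ + 1)) - sA B (y (k₀ + 1 + 1))‖ ^ 2 - ‖sA B (y (k₀ + 1)) - sA B (y k₀)‖ ^ 2 := by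
      rw [norm_add_sq_real]
      ring
    have hNA : ‖sA A (fun i => x (k₀ + 1) i - x (k₀ + 1 + 1) i)‖ ^ 2 ≤ (p:ℝ) * (∑ i, ‖mv (A i) (x (k₀ + 1) i - x (k₀ + 1 + 1) i)‖ ^ 2) := by
      simpa [sA] using csum (fun i => mv (A i) (x (k₀ + 1) i - x (k₀ + 1 + 1) i))
    have hT2 : ‖sA B (y (k₀ + 1)) - sA B (y (k₀ + 1 + 1))‖ ^ 2 ≤ (q:ℝ) * (∑ j, ‖mv (B j) (y (k₀ + 1) j - y (k₀ + 1 + 1) j)‖ ^ 2) := by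
      have h := csum (fun j => mv (B j) (y (k₀ + 1) j - y (k₀ + 1 + 1) j))
      rw [hMDsum, Fintype.card_fin] at h
      exact h
    have hTT : ‖(sA B (y (k₀ + 1)) - sA B (y (k₀ + 1 + 1))) + (sA B (y (k₀ + 1)) - sA B (y k₀))‖ ^ 2 ≤ (q:ℝ) * (∑ j, ‖(mv (B j) (y (k₀ + 1) j) - mv (B j) (y (k₀ + 1 + 1) j)) + (mv (B j) (y (k₀ + 1) j) - mv (B j) (y k₀ j))‖ ^ 2) := by
      have h := csum (fun j => (mv (B j) (y (k₀ + 1) j) - mv (B j) (y (k₀ + 1 + 1) j)) + (mv (B j) (y (k₀ + 1) j) - mv (B j) (y k₀ j)))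
      rw [Finset.sum_add_distrib, hTsum, hTPsum, Fintype.card_fin] at h
      exact h
    have hPa0 : 0 ≤ (∑ i, ‖mv (A i) (x (k₀ + 1) i - x (k₀ + 1 + 1) i)‖ ^ 2) := Finset.sum_nonneg fun i _ => by positivity
    have hPd0 : 0 ≤ (∑ j, ‖mv (B j) (y (k₀ + 1) j - y (k₀ + 1 + 1) j)‖ ^ 2) := Finset.sum_nonneg fun j _ => by positivity
    have hPP0 : 0 ≤ (∑ j, ‖(mv (B j) (y (k₀ + 1) j) - mv (B j) (y (k₀ + 1 + 1) j)) + (mv (B j) (y (k₀ + 1) j) - mv (B j) (y k₀ j))‖ ^ 2) := Finset.sum_nonneg fun j _ => by positivity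
    have hPPb : 0 ≤ β * ((σ2+1)*(∑ j, ‖(mv (B j) (y (k₀ + 1) j) - mv (B j) (y (k₀ + 1 + 1) j)) + (mv (B j) (y (k₀ + 1) j) - mv (B j) (y k₀ j))‖ ^ 2) - ‖(sA B (y (k₀ + 1)) - sA B (y (k₀ + 1 + 1))) + (sA B (y (k₀ + 1)) - sA B (y k₀))‖ ^ 2) := by
      refine mul_nonneg hβ.le ?_
      have hqσ := mul_le_mul_of_nonneg_right (show (q:ℝ) ≤ σ2 + 1 by linarith) hPP0
      linarith [hTT, hqσ]
    have hEHsplit : sA A (x (k₀ + 1 + 1)) + sA B (y (k₀ + 1)) - c = (sA A (x (k₀ + 1 + 1)) + sA B (y (k₀ + 1 + 1)) - c) + (sA B (y (k₀ + 1)) - sA B (y (k₀ + 1 + 1))) := by abel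
    have h_tE : ⟪sA B (y (k₀ + 1)) - sA B (y (k₀ + 1 + 1)), sA A (x (k₀ + 1 + 1)) + sA B (y (k₀ + 1)) - c⟫ = ⟪sA B (y (k₀ + 1)) - sA B (y (k₀ + 1 + 1)), sA A (x (k₀ + 1 + 1)) + sA B (y (k₀ + 1 + 1)) - c⟫ + ‖sA B (y (k₀ + 1)) - sA B (y (k₀ + 1 + 1))‖ ^ 2 := by
      rw [hEHsplit, inner_add_right, real_inner_self_eq_norm_sq]
    have h_EH2 : ‖sA A (x (k₀ + 1 + 1)) + sA B (y (k₀ + 1)) - c‖ ^ 2 = ‖sA A (x (k₀ + 1 + 1)) + sA B (y (k₀ + 1 + 1)) - c‖ ^ 2 + 2*(⟪sA B (y (k₀ + 1)) - sA B (y (k₀ + 1 + 1)), sA A (x (k₀ + 1 + 1)) + sA B (y (k₀ + 1 + 1)) - c⟫) + ‖sA B (y (k₀ + 1)) - sA B (y (k₀ + 1 + 1))‖ ^ 2 := by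
      rw [hEHsplit, norm_add_sq_real, real_inner_comm]
    have hSQ : 0 ≤ β*((1-s)^2*‖sA A (x (k₀ + 1)) + sA B (y (k₀ + 1)) - c‖ ^ 2 + 2*((1-s)*(1-τ))*(⟪sA B (y (k₀ + 1)) - sA B (y (k₀ + 1 + 1)), sA A (x (k₀ + 1)) + sA B (y (k₀ + 1)) - c⟫) + (1-τ)^2*‖sA B (y (k₀ + 1)) - sA B (y (k₀ + 1 + 1))‖ ^ 2) := by
      have h1 : 0 ≤ β*‖((1-s) • (sA A (x (k₀ + 1)) + sA B (y (k₀ + 1)) - c) + (1-τ) • (sA B (y (k₀ + 1)) - sA B (y (k₀ + 1 + 1))) : EuclideanSpace ℝ (Fin n))‖^2 := by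
        positivity
      have h2 : ‖((1-s) • (sA A (x (k₀ + 1)) + sA B (y (k₀ + 1)) - c) + (1-τ) • (sA B (y (k₀ + 1)) - sA B (y (k₀ + 1 + 1))) : EuclideanSpace ℝ (Fin n))‖^2
          = (1-s)^2*‖sA A (x (k₀ + 1)) + sA B (y (k₀ + 1)) - c‖ ^ 2 + 2*((1-s)*(1-τ))*(⟪sA B (y (k₀ + 1)) - sA B (y (k₀ + 1 + 1)), sA A (x (k₀ + 1)) + sA B (y (k₀ + 1)) - c⟫) + (1-τ)^2*‖sA B (y (k₀ + 1)) - sA B (y (k₀ + 1 + 1))‖ ^ 2 := by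
        rw [norm_add_sq_real, real_inner_smul_left, real_inner_smul_right,
          real_inner_comm, norm_smul, norm_smul, Real.norm_eq_abs, Real.norm_eq_abs,
          mul_pow, mul_pow, sq_abs, sq_abs]
        ring
      rw [h2] at h1
      exact h1
    -- transform the goal
    rw [ge_iff_le]
    refine le_of_mul_le_mul_left ?_ hτ1
    simp only [Gform, Hyform]
    rw [sub_sub_cancel]
    rw [show sA B (fun j => y (k₀ + 1) j - y (k₀ + 1 + 1) j) = sA B (y (k₀ + 1)) - sA B (y (k₀ + 1 + 1)) from by
      simp only [sA, mv_sub, Finset.sum_sub_distrib]]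
    rw [show sA B (fun j => y (k₀ + 1 + 1) j - y (k₀ + 1) j) = sA B (y (k₀ + 1 + 1)) - sA B (y (k₀ + 1)) from by
      simp only [sA, mv_sub, Finset.sum_sub_distrib]]
    rw [show sA B (fun j => y (k₀ + 1) j - y k₀ j) = sA B (y (k₀ + 1)) - sA B (y k₀) from by
      simp only [sA, mv_sub, Finset.sum_sub_distrib]]
    rw [show (∑ j, ‖mv (B j) (y (k₀ + 1 + 1) j - y (k₀ + 1) j)‖ ^ 2) = (∑ j, ‖mv (B j) (y (k₀ + 1) j - y (k₀ + 1 + 1) j)‖ ^ 2) from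
      Finset.sum_congr rfl fun j _ => by rw [mv_sub, norm_sub_rev, ← mv_sub]]
    rw [norm_sub_rev (sA B (y (k₀ + 1 + 1)))]
    rw [real_inner_smul_right, norm_smul, Real.norm_eq_abs, abs_of_pos hβ, mul_pow]
    rw [h_tE, h_EH2]
    -- fold scalar atoms
    set vPa := (∑ i, ‖mv (A i) (x (k₀ + 1) i - x (k₀ + 1 + 1) i)‖ ^ 2) with hvPa
    set vNA := ‖sA A (fun i => x (k₀ + 1) i - x (k₀ + 1 + 1) i)‖ ^ 2 with hvNA
    set vPd := (∑ j, ‖mv (B j) (y (k₀ + 1) j - y (k₀ + 1 + 1) j)‖ ^ 2) with hvPd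
    set vPdp := (∑ j, ‖mv (B j) (y (k₀ + 1) j - y k₀ j)‖ ^ 2) with hvPdp
    set vPP := (∑ j, ‖(mv (B j) (y (k₀ + 1) j) - mv (B j) (y (k₀ + 1 + 1) j)) + (mv (B j) (y (k₀ + 1) j) - mv (B j) (y k₀ j))‖ ^ 2) with hvPP
    set vDS := (∑ j, ⟪(mv (B j) (y (k₀ + 1) j) - mv (B j) (y (k₀ + 1 + 1) j)), (mv (B j) (y (k₀ + 1) j) - mv (B j) (y (k₀ + 1 + 1) j)) + (mv (B j) (y (k₀ + 1) j) - mv (B j) (y k₀ j))⟫) with hvDS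
    set vT2 := ‖sA B (y (k₀ + 1)) - sA B (y (k₀ + 1 + 1))‖ ^ 2 with hvT2
    set vTp2 := ‖sA B (y (k₀ + 1)) - sA B (y k₀)‖ ^ 2 with hvTp2
    set vTT := ‖(sA B (y (k₀ + 1)) - sA B (y (k₀ + 1 + 1))) + (sA B (y (k₀ + 1)) - sA B (y k₀))‖ ^ 2 with hvTT
    set vE2 := ‖sA A (x (k₀ + 1 + 1)) + sA B (y (k₀ + 1 + 1)) - c‖ ^ 2 with hvE2
    set vR2 := ‖sA A (x (k₀ + 1)) + sA B (y (k₀ + 1)) - c‖ ^ 2 with hvR2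
    set vte := ⟪sA B (y (k₀ + 1)) - sA B (y (k₀ + 1 + 1)), sA A (x (k₀ + 1 + 1)) + sA B (y (k₀ + 1 + 1)) - c⟫ with hvte
    set vtR := ⟪sA B (y (k₀ + 1)) - sA B (y (k₀ + 1 + 1)), sA A (x (k₀ + 1)) + sA B (y (k₀ + 1)) - c⟫ with hvtR
    set vtEH := ⟪sA B (y (k₀ + 1)) - sA B (y (k₀ + 1 + 1)), sA A (x (k₀ + 1 + 1)) + sA B (y (k₀ + 1)) - c⟫ with hvtEH
    set vtTP := ⟪sA B (y (k₀ + 1)) - sA B (y (k₀ + 1 + 1)), sA B (y (k₀ + 1)) - sA B (y k₀)⟫ with hvtTP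
    set vmin := ((σ1 + 1 - ↑p) ⊓ (σ2 + 1 - ↑q)) with hvmin
    -- premultiplied equalities
    have hD' : (σ2+1)*β*(2*vDS) = (σ2+1)*β*(vPd - vPdp + vPP) := by rw [hD]
    have htt' : β*(2*vtTP) = β*(vTT - vT2 - vTp2) := by rw [htt]
    have h_tEβ : (1+τ)*β*vtEH = (1+τ)*β*(vte + vT2) := by rw [h_tE]
    have hkey2 : (β/2)*((σ2+1)*vPd - vT2) - (β/2)*((σ2+1)*vPdp - vTp2)
        + β*vT2 + (1-s)*β*vtR ≤ (1+τ)*β*(vte + vT2) := by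
      linarith [keyscal, hD', htt', h_tEβ, hPPb]
    have hS1' : 2*(1-τ)*((β/2)*((σ2+1)*vPd - vT2) - (β/2)*((σ2+1)*vPdp - vTp2)
        + β*vT2 + (1-s)*β*vtR)
        ≤ 2*(1-τ)*((1+τ)*β*(vte + vT2)) :=
      mul_le_mul_of_nonneg_left hkey2 (by linarith)
    have hmin1 : vmin ≤ σ1 + 1 - (p:ℝ) := min_le_left _ _
    have hmin2 : vmin ≤ σ2 + 1 - (q:ℝ) := min_le_right _ _
    have hC1' : (1+τ)*(β * vmin * vPa) ≤ (1+τ)*(β * ((σ1+1)*vPa - vNA)) := by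
      refine mul_le_mul_of_nonneg_left ?_ hτ1.le
      have ha := mul_le_mul_of_nonneg_right (mul_le_mul_of_nonneg_left hmin1 hβ.le) hPa0
      have hb := mul_le_mul_of_nonneg_left
        (show (σ1 + 1 - (p:ℝ))*vPa ≤ (σ1+1)*vPa - vNA by linarith [hNA]) hβ.le
      linarith [ha, hb]
    have hC2' : (1+τ)*(β * vmin * vPd) ≤ (1+τ)*(β * ((σ2+1)*vPd - vT2)) := by
      refine mul_le_mul_of_nonneg_left ?_ hτ1.le
      have ha := mul_le_mul_of_nonneg_right (mul_le_mul_of_nonneg_left hmin2 hβ.le) hPd0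
      have hb := mul_le_mul_of_nonneg_left
        (show (σ2 + 1 - (q:ℝ))*vPd ≤ (σ2+1)*vPd - vT2 by linarith [hT2]) hβ.le
      linarith [ha, hb]
    have hExp : (1+τ)*(β * vmin * (vPa + vPd)
          + (2 - τ - s - (1 - s) ^ 2 / (1 + τ)) * β * vE2
          + (1 - s) ^ 2 / (1 + τ) * β * (vE2 - vR2)
          + (1 - τ) / (1 + τ) * (β * ((σ2 + 1) * vPd - vT2) - β * ((σ2 + 1) * vPdp - vTp2)))
        = (1+τ)*(β * vmin * vPa) + (1+τ)*(β * vmin * vPd)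
          + ((2 - τ - s)*(1+τ) - (1 - s)^2) * β * vE2
          + (1 - s)^2 * β * (vE2 - vR2)
          + (1 - τ) * (β * ((σ2 + 1) * vPd - vT2) - β * ((σ2 + 1) * vPdp - vTp2)) := by
      field_simp
    have hdivG : (1+τ)*((2 - τ - s) / β * (β ^ 2 * (vE2 + 2*vte + vT2)))
        = (1+τ)*((2 - τ - s) * β * (vE2 + 2*vte + vT2)) := by
      field_simp
    have hSQ' : 0 ≤ β*((1-s)^2*vR2 + 2*((1-s)*(1-τ))*vtR + (1-τ)^2*vT2) := hSQ
    linarith [hExp, hdivG, hS1', hSQ', hC1', hC2']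
end
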